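/- Fix 0 ≤ α < n, a real number m ≥ 1, and 0 < ε < 1, and let σ be a positive locally finite Borel measure on ℝⁿ. Suppose J ⊆ I ⊆ K are cubes in ℝⁿ with dist(J, ∂I) > 2√n · ℓ(J)^ε ℓ(I)^{1−ε}. Then P_m^α(J, σ1_{K∖I}) ≤ C (ℓ(J)/ℓ(I))^{m − ε(n+m−α)} · P_m^α(I, σ1_{K∖I}), where C depends only on n, m, α and ε. -/

import Mathlib

open MeasureTheory Set Function
open scoped ENNReal NNReal

noncomputable section

/-- `ℝⁿ` with the Euclidean metric. -/
abbrev Rn (n : ℕ) : Type := EuclideanSpace ℝ (Fin n)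

/-- The closed axes-parallel cube with center `c` and side length `l`. -/
def Cube {n : ℕ} (c : Rn n) (l : ℝ) : Set (Rn n) :=
  {x | ∀ i, |x i - c i| ≤ l / 2}

/-- The reproducing Poisson integral `P^α(Q, μ)` of a cube with center `c`, side length `l`. -/
def Poisson {n : ℕ} (α : ℝ) (c : Rn n) (l : ℝ) (μ : Measure (Rn n)) : ℝ≥0∞ :=
  ∫⁻ x, ENNReal.ofReal ((l / (l + dist x c) ^ 2) ^ ((n : ℝ) - α)) ∂μ

/-- The `m`-th order fractional Poisson integral `P_m^α(Q, μ)`. -/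
def PoissonM {n : ℕ} (α m : ℝ) (c : Rn n) (l : ℝ) (μ : Measure (Rn n)) : ℝ≥0∞ :=
  ∫⁻ y, ENNReal.ofReal (l ^ m / (l + dist y c) ^ ((n : ℝ) + m - α)) ∂μ

/-- The one-tailed Muckenhoupt constant `𝒜₂^α(σ, ω)`, recalling `|Q|^{1-α/n} = ℓ(Q)^{n-α}`. -/
def A2tailed {n : ℕ} (α : ℝ) (σ ω : Measure (Rn n)) : ℝ≥0∞ :=
  ⨆ (c : Rn n) (l : ℝ) (_ : 0 < l),
    Poisson α c l σ * ω (Cube c l) / ENNReal.ofReal (l ^ ((n : ℝ) - α))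

/-- The classical fractional Muckenhoupt constant `A₂^α(σ, ω)`. -/
def A2classical {n : ℕ} (α : ℝ) (σ ω : Measure (Rn n)) : ℝ≥0∞ :=
  ⨆ (c : Rn n) (l : ℝ) (_ : 0 < l),
    σ (Cube c l) * ω (Cube c l) / ENNReal.ofReal (l ^ (2 * ((n : ℝ) - α)))

lemma cube_mem_self {n : ℕ} (c : Rn n) {l : ℝ} (hl : 0 ≤ l) : c ∈ Cube c l := by
  intro i; simp; linarith

lemma cube_isClosed {n : ℕ} (c : Rn n) (l : ℝ) : IsClosed (Cube c l) := by
  have h : Cube c l = ⋂ i, {x : Rn n | |x i - c i| ≤ l / 2} := by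
    ext x; simp [Cube]
  rw [h]
  refine isClosed_iInter fun i => ?_
  have hc : Continuous fun x : Rn n => |x i - c i| :=
    ((EuclideanSpace.proj (𝕜 := ℝ) i).continuous.sub continuous_const).abs
  exact isClosed_le hc continuous_const

lemma cube_side_le {n : ℕ} (hn : 0 < n) {cJ cI : Rn n} {lJ lI : ℝ} (hlJ : 0 < lJ)
    (h : Cube cJ lJ ⊆ Cube cI lI) : lJ ≤ lI := by
  set i0 : Fin n := ⟨0, hn⟩
  set e : Rn n := EuclideanSpace.single i0 (lJ / 2) with he
  have hmem : ∀ s : ℝ, |s| ≤ 1 → cJ + s • e ∈ Cube cJ lJ := by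
    intro s hs
    intro j
    have h0 : (cJ + s • e) j - cJ j = s * e j := by
      simp [PiLp.add_apply, PiLp.smul_apply, smul_eq_mul]
    rw [h0, abs_mul]
    rcases eq_or_ne j i0 with rfl | hj
    · have h1 : e i0 = lJ / 2 := by simp [he, EuclideanSpace.single_apply]
      rw [h1, abs_of_pos (show (0:ℝ) < lJ / 2 by linarith)]
      nlinarith [abs_nonneg s]
    · have h1 : e j = 0 := by simp [he, EuclideanSpace.single_apply, hj]
      rw [h1]; simp; linarith
  have h₁ := h (hmem 1 (by norm_num)) i0
  have h₂ := h (hmem (-1) (by norm_num)) i0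
  have e0 : e i0 = lJ / 2 := by simp [he, EuclideanSpace.single_apply]
  have ha : (cJ + (1:ℝ) • e) i0 = cJ i0 + lJ / 2 := by
    simp [PiLp.add_apply, PiLp.smul_apply, e0]
  have hb : (cJ + (-1:ℝ) • e) i0 = cJ i0 - lJ / 2 := by
    simp [PiLp.add_apply, PiLp.smul_apply, e0]; ring
  rw [ha] at h₁; rw [hb] at h₂
  have h₁' := abs_le.1 h₁
  have h₂' := abs_le.1 h₂
  linarith [h₁'.1, h₁'.2, h₂'.1, h₂'.2]

lemma cube_dist_center {n : ℕ} {c x : Rn n} {l : ℝ} (hl : 0 ≤ l)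
    (hx : x ∈ Cube c l) : dist x c ≤ Real.sqrt n * l := by
  rw [EuclideanSpace.dist_eq]
  have hb : ∑ i, dist (x i) (c i) ^ 2 ≤ (n : ℝ) * (l / 2) ^ 2 := by
    calc ∑ i, dist (x i) (c i) ^ 2 ≤ ∑ _i : Fin n, (l / 2) ^ 2 := by
          refine Finset.sum_le_sum fun i _ => ?_
          have := hx i
          rw [Real.dist_eq]
          nlinarith [abs_nonneg (x i - c i)]
      _ = (n : ℝ) * (l / 2) ^ 2 := by simp [Finset.sum_const]
  calc Real.sqrt (∑ i, dist (x i) (c i) ^ 2) ≤ Real.sqrt ((n : ℝ) * (l / 2) ^ 2) :=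
        Real.sqrt_le_sqrt hb
    _ = Real.sqrt n * (l / 2) := by
        rw [Real.sqrt_mul (by positivity), Real.sqrt_sq (by linarith)]
    _ ≤ Real.sqrt n * l := by
        have := Real.sqrt_nonneg (n : ℝ); nlinarith

lemma frontier_infDist_le {n : ℕ} {S : Set (Rn n)} {x y : Rn n}
    (hx : x ∈ S) (hy : y ∉ S) :
    Metric.infDist x (frontier S) ≤ dist y x := by
  have hS : S ≠ univ := fun h => hy (h ▸ mem_univ y)
  obtain ⟨z, hz, hdz⟩ := exists_mem_frontier_infDist_compl_eq_dist hx hS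
  calc Metric.infDist x (frontier S) ≤ dist x z := Metric.infDist_le_dist_of_mem hz
    _ = Metric.infDist x Sᶜ := hdz.symm
    _ ≤ dist x y := Metric.infDist_le_dist_of_mem hy
    _ = dist y x := dist_comm x y

lemma key_real (m ε t lJ lI dJ dI sn : ℝ)
    (hlJ : 0 < lJ) (hlI : 0 < lI) (hJI : lJ ≤ lI) (hε0 : 0 < ε)
    (ht : 0 < t) (hsn : 1 ≤ sn) (hdJ : 0 ≤ dJ) (hdI0 : 0 ≤ dI)
    (hfar : lJ ^ ε * lI ^ (1 - ε) ≤ dJ)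
    (hdI : dI ≤ dJ + sn * lI) :
    lJ ^ m / (lJ + dJ) ^ t ≤
      ((2 + sn) ^ t * (lJ / lI) ^ (m - ε * t)) * (lI ^ m / (lI + dI) ^ t) := by
  set A := lJ + dJ with hA_def
  set R := (lI / lJ) ^ ε with hR_def
  have hA : 0 < A := by positivity
  have hRpos : 0 < R := by positivity
  have hR1 : 1 ≤ R := Real.one_le_rpow (by rw [le_div_iff₀ hlJ]; linarith) hε0.le
  have hlIRA : lI ≤ R * A := by
    have hkey : R * (lJ ^ ε * lI ^ (1 - ε)) = lI := by
      rw [hR_def, ← mul_assoc, ← Real.mul_rpow (by positivity) hlJ.le,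
        div_mul_cancel₀ _ hlJ.ne', ← Real.rpow_add hlI]
      norm_num
    calc lI = R * (lJ ^ ε * lI ^ (1 - ε)) := hkey.symm
      _ ≤ R * A := by
          refine mul_le_mul_of_nonneg_left ?_ hRpos.le
          calc lJ ^ ε * lI ^ (1 - ε) ≤ dJ := hfar
            _ ≤ A := by rw [hA_def]; linarith
  have hB : lI + dI ≤ (2 + sn) * (R * A) := by
    have h1 : dJ ≤ R * A := by nlinarith
    nlinarith
  have hBpos : 0 < lI + dI := by positivity
  have hBt : (lI + dI) ^ t ≤ (2 + sn) ^ t * R ^ t * A ^ t := by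
    calc (lI + dI) ^ t ≤ ((2 + sn) * (R * A)) ^ t :=
          Real.rpow_le_rpow hBpos.le hB ht.le
      _ = (2 + sn) ^ t * R ^ t * A ^ t := by
          rw [Real.mul_rpow (by positivity) (by positivity),
            Real.mul_rpow hRpos.le hA.le, mul_assoc]
  have hid : lJ ^ m * R ^ t = (lJ / lI) ^ (m - ε * t) * lI ^ m := by
    have h1 : R ^ t = lI ^ (ε * t) / lJ ^ (ε * t) := by
      rw [hR_def, ← Real.rpow_mul (by positivity), Real.div_rpow hlI.le hlJ.le]
    have h2 : (lJ / lI) ^ (m - ε * t) = (lJ ^ m / lJ ^ (ε * t)) / (lI ^ m / lI ^ (ε * t)) := by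
      rw [Real.div_rpow hlJ.le hlI.le, Real.rpow_sub hlJ, Real.rpow_sub hlI]
    rw [h1, h2]
    have n1 : lJ ^ (ε * t) ≠ 0 := (Real.rpow_pos_of_pos hlJ _).ne'
    have n2 : lI ^ (ε * t) ≠ 0 := (Real.rpow_pos_of_pos hlI _).ne'
    have n3 : lJ ^ m ≠ 0 := (Real.rpow_pos_of_pos hlJ _).ne'
    have n4 : lI ^ m ≠ 0 := (Real.rpow_pos_of_pos hlI _).ne'
    field_simp
  have hAt : (0:ℝ) < A ^ t := Real.rpow_pos_of_pos hA t
  have hBt' : (0:ℝ) < (lI + dI) ^ t := Real.rpow_pos_of_pos hBpos t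
  rw [← mul_div_assoc, div_le_div_iff₀ hAt hBt']
  calc lJ ^ m * (lI + dI) ^ t
      ≤ lJ ^ m * ((2 + sn) ^ t * R ^ t * A ^ t) := by
        refine mul_le_mul_of_nonneg_left hBt (by positivity)
    _ = (2 + sn) ^ t * (lJ ^ m * R ^ t) * A ^ t := by ring
    _ = (2 + sn) ^ t * ((lJ / lI) ^ (m - ε * t) * lI ^ m) * A ^ t := by rw [hid]
    _ = (2 + sn) ^ t * (lJ / lI) ^ (m - ε * t) * lI ^ m * A ^ t := by ring

/-- The Poisson decay estimate: if `J ⊆ I ⊆ K` are cubes with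
`dist(J, ∂I) > 2√n ℓ(J)^ε ℓ(I)^{1-ε}`, then
`P_m^α(J, σ 1_{K∖I}) ≤ C (ℓ(J)/ℓ(I))^{m - ε(n+m-α)} P_m^α(I, σ 1_{K∖I})`, where `C`
depends only on `n, m, α, ε`. -/
theorem statement15
    (n : ℕ) (hn : 0 < n) (α m ε : ℝ) (hα0 : 0 ≤ α) (hαn : α < n)
    (hm : 1 ≤ m) (hε0 : 0 < ε) (hε1 : ε < 1) :
    ∃ C : ℝ, 0 < C ∧
      ∀ σ : Measure (Rn n), IsLocallyFiniteMeasure σ →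
      ∀ (cJ cI cK : Rn n) (lJ lI lK : ℝ), 0 < lJ → 0 < lI → 0 < lK →
        Cube cJ lJ ⊆ Cube cI lI → Cube cI lI ⊆ Cube cK lK →
        (∀ x ∈ Cube cJ lJ,
          2 * Real.sqrt n * lJ ^ ε * lI ^ (1 - ε) <
            Metric.infDist x (frontier (Cube cI lI))) →
        PoissonM α m cJ lJ (σ.restrict (Cube cK lK \ Cube cI lI)) ≤
          ENNReal.ofReal (C * (lJ / lI) ^ (m - ε * ((n : ℝ) + m - α))) *
            PoissonM α m cI lI (σ.restrict (Cube cK lK \ Cube cI lI)) := by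
  have hn1 : (1:ℝ) ≤ n := by exact_mod_cast hn
  set t : ℝ := (n : ℝ) + m - α with ht_def
  have ht : 0 < t := by rw [ht_def]; linarith
  have hsn : 1 ≤ Real.sqrt n := by
    rw [show (1:ℝ) = Real.sqrt 1 by simp]
    exact Real.sqrt_le_sqrt hn1
  have hsn0 : 0 ≤ Real.sqrt n := by linarith
  refine ⟨(2 + Real.sqrt n) ^ t, by positivity, ?_⟩
  intro σ _ cJ cI cK lJ lI lK hlJ hlI hlK hJI hIK hdist
  have hcJmem : cJ ∈ Cube cJ lJ := cube_mem_self cJ hlJ.le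
  have hlJI : lJ ≤ lI := cube_side_le hn hlJ hJI
  have hcc : dist cJ cI ≤ Real.sqrt n * lI := cube_dist_center hlI.le (hJI hcJmem)
  have hfar0 : 2 * Real.sqrt n * lJ ^ ε * lI ^ (1 - ε) <
      Metric.infDist cJ (frontier (Cube cI lI)) := hdist cJ hcJmem
  have hSm : MeasurableSet (Cube cK lK \ Cube cI lI) :=
    (cube_isClosed cK lK).measurableSet.diff (cube_isClosed cI lI).measurableSet
  set Cfac : ℝ := (2 + Real.sqrt n) ^ t * (lJ / lI) ^ (m - ε * t) with hCfac_def
  have hCfac : 0 ≤ Cfac := by positivity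
  have hpt : ∀ y ∈ Cube cK lK \ Cube cI lI,
      ENNReal.ofReal (lJ ^ m / (lJ + dist y cJ) ^ t) ≤
        ENNReal.ofReal Cfac * ENNReal.ofReal (lI ^ m / (lI + dist y cI) ^ t) := by
    intro y hy
    rw [← ENNReal.ofReal_mul hCfac]
    apply ENNReal.ofReal_le_ofReal
    have hyI : y ∉ Cube cI lI := hy.2
    have h1 : Metric.infDist cJ (frontier (Cube cI lI)) ≤ dist y cJ :=
      frontier_infDist_le (hJI hcJmem) hyI
    have hfar : lJ ^ ε * lI ^ (1 - ε) ≤ dist y cJ := by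
      have hP : 0 < lJ ^ ε * lI ^ (1 - ε) :=
        mul_pos (Real.rpow_pos_of_pos hlJ ε) (Real.rpow_pos_of_pos hlI (1 - ε))
      nlinarith [mul_le_mul_of_nonneg_right hsn hP.le]
    have hdI : dist y cI ≤ dist y cJ + Real.sqrt n * lI := by
      calc dist y cI ≤ dist y cJ + dist cJ cI := dist_triangle y cJ cI
        _ ≤ _ := by linarith
    exact key_real m ε t lJ lI (dist y cJ) (dist y cI) (Real.sqrt n)
      hlJ hlI hlJI hε0 ht hsn dist_nonneg dist_nonneg hfar hdI
  simp only [PoissonM, ← ht_def, ← hCfac_def]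
  calc ∫⁻ y, ENNReal.ofReal (lJ ^ m / (lJ + dist y cJ) ^ t)
        ∂(σ.restrict (Cube cK lK \ Cube cI lI))
      ≤ ∫⁻ y, ENNReal.ofReal Cfac * ENNReal.ofReal (lI ^ m / (lI + dist y cI) ^ t)
        ∂(σ.restrict (Cube cK lK \ Cube cI lI)) :=
        lintegral_mono_ae ((ae_restrict_iff' hSm).2 (ae_of_all _ hpt))
    _ = ENNReal.ofReal Cfac * ∫⁻ y, ENNReal.ofReal (lI ^ m / (lI + dist y cI) ^ t)
        ∂(σ.restrict (Cube cK lK \ Cube cI lI)) :=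
        lintegral_const_mul' _ _ ENNReal.ofReal_ne_top
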